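/- Let G be a 2-vertex-connected graph, and let X ⊆ V(G) be the vertex set of a cycle P₀ together with a maximal sequence of ears each of size at least 3 attached to it. Then Y = V(G) \ X is an independent set in G. -/

import Mathlib

open SimpleGraph

/-- `T` is an unsafe spanning connected subgraph of `G` with unsafe edge set `Unsafe`:
`T` consists of edges of `G`, the graph `(V, T)` is spanning and connected, and it
remains connected after removal of any single unsafe edge of `T`. -/
def IsUSCS {V : Type*} (G : SimpleGraph V) (Unsafe : Set (Sym2 V)) (T : Set (Sym2 V)) : Prop :=
  T ⊆ G.edgeSet ∧ (SimpleGraph.fromEdgeSet T).Connected ∧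
    ∀ e ∈ T, e ∈ Unsafe → (SimpleGraph.fromEdgeSet (T \ {e})).Connected

/-- An ear: a walk in `G` packaged with its endpoints. -/
def Ear {V : Type*} (G : SimpleGraph V) : Type _ := Σ (u v : V), G.Walk u v

/-- The vertex set of an ear. -/
def earVerts {V : Type*} {G : SimpleGraph V} (e : Ear G) : Set V := {x | x ∈ e.2.2.support}

/-- The edge set of an ear. -/
def earEdges {V : Type*} {G : SimpleGraph V} (e : Ear G) : Set (Sym2 V) := {x | x ∈ e.2.2.edges}

/-- The size of an ear is its number of edges. -/
def earSize {V : Type*} {G : SimpleGraph V} (e : Ear G) : ℕ := e.2.2.length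

/-- The ear is a cycle. -/
def IsCycleEar {V : Type*} {G : SimpleGraph V} (e : Ear G) : Prop :=
  ∃ h : e.2.1 = e.1, (e.2.2.copy rfl h).IsCycle

/-- `e` is an ear that can be attached to the already constructed part on vertex set `X`:
either a cycle sharing exactly one vertex (its base point) with `X`, or a path whose
two (distinct) endpoints lie in `X` and whose internal vertices avoid `X`. -/
def IsEarOver {V : Type*} {G : SimpleGraph V} (X : Set V) (e : Ear G) : Prop :=
  (IsCycleEar e ∧ earVerts e ∩ X = {e.1}) ∨
  (e.1 ≠ e.2.1 ∧ e.2.2.IsPath ∧ earVerts e ∩ X = {e.1, e.2.1})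

/-- The vertices of the ears preceding index `i` in the list `L`. -/
def prevVerts {V : Type*} {G : SimpleGraph V} (L : List (Ear G)) (i : ℕ) : Set V :=
  {x | ∃ j, ∃ hj : j < L.length, j < i ∧ x ∈ earVerts (L.get ⟨j, hj⟩)}

/-- `L` is an ear decomposition of `G`: the first ear is a cycle, the ears are pairwise
edge-disjoint, every later ear is attached to the union of the earlier ones, and the
ears cover all vertices and edges of `G`. -/
def IsEarDecomp {V : Type*} (G : SimpleGraph V) (L : List (Ear G)) : Prop :=
  (∃ h0 : 0 < L.length, IsCycleEar (L.get ⟨0, h0⟩)) ∧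
  (∀ i j (hi : i < L.length) (hj : j < L.length), i ≠ j →
    Disjoint (earEdges (L.get ⟨i, hi⟩)) (earEdges (L.get ⟨j, hj⟩))) ∧
  (∀ i (hi : i < L.length), 0 < i → IsEarOver (prevVerts L i) (L.get ⟨i, hi⟩)) ∧
  (∀ x : V, ∃ i, ∃ hi : i < L.length, x ∈ earVerts (L.get ⟨i, hi⟩)) ∧
  (G.edgeSet = {e | ∃ i, ∃ hi : i < L.length, e ∈ earEdges (L.get ⟨i, hi⟩)})

/-- A graph is 2-vertex-connected: it has at least 3 vertices, is connected, and removing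
any single vertex leaves it connected (no cut vertex). -/
def TwoVertexConnected {V : Type*} (G : SimpleGraph V) : Prop :=
  3 ≤ Nat.card V ∧ G.Connected ∧ ∀ v : V, (G.induce {u | u ≠ v}).Connected

/-- Trim a walk ending in `X` at the first hit of `X`. -/
lemma trim_walk {V : Type*} {G : SimpleGraph V} {X : Set V} :
    ∀ {u v : V} (w : G.Walk u v), u ∉ X → v ∈ X →
      ∃ x, x ∈ X ∧ ∃ p : G.Walk u x, p.IsPath ∧
        (∀ y ∈ p.support, y ∈ w.support) ∧ (∀ y ∈ p.support, y ≠ x → y ∉ X) := by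
  classical
  intro u v w
  induction w with
  | nil => intro hu hv; exact absurd hv hu
  | @cons u u' v h w' ih =>
    intro hu hv
    by_cases hu' : u' ∈ X
    · refine ⟨u', hu', Walk.cons h Walk.nil, ?_, ?_, ?_⟩
      · rw [Walk.isPath_def]; simp [h.ne]
      · intro y hy; simp at hy; rcases hy with rfl | rfl <;> simp
      · intro y hy hne; simp at hy; rcases hy with rfl | rfl
        · exact hu
        · exact absurd rfl hne
    · obtain ⟨x, hx, p', hp', hsub, hnon⟩ := ih hu' hv
      refine ⟨x, hx, (Walk.cons h p').toPath, (Walk.cons h p').toPath.2, ?_, ?_⟩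
      · intro y hy
        have := Walk.support_toPath_subset _ hy
        rw [Walk.support_cons] at this
        rcases List.mem_cons.mp this with rfl | hy'
        · simp
        · simp only [Walk.support_cons, List.mem_cons]
          right; exact hsub y hy'
      · intro y hy hne
        have := Walk.support_toPath_subset _ hy
        rw [Walk.support_cons] at this
        rcases List.mem_cons.mp this with rfl | hy'
        · exact hu
        · exact hnon y hy' hne

lemma extract_two {V : Type*} {G : SimpleGraph V} {X : Set V} {x a b : V}
    (r : G.Walk x a) (hr : r.IsPath) (hnon : ∀ y ∈ r.support, y ≠ x → y ∉ X)
    (ha : a ∉ X) (hb : b ∉ X) (hab : G.Adj a b) :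
    ∃ c1 c2, c1 ∉ X ∧ c2 ∉ X ∧ G.Adj x c1 ∧ G.Adj c1 c2 := by
  cases r with
  | nil => exact ⟨b, x, hb, ha, hab, hab.symm⟩
  | @cons _ w1 _ h₁ r₁ =>
    have hw1 : w1 ∉ X := by
      refine hnon w1 ?_ h₁.ne'
      simp [Walk.support_cons]
    cases r₁ with
    | nil => exact ⟨a, b, ha, hb, h₁, hab⟩
    | @cons _ w2 _ h₂ r₂ =>
      have hw2x : w2 ≠ x := by
        intro h
        subst h
        have := hr.2
        simp [Walk.support_cons] at this
      have hw2 : w2 ∉ X := by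
        refine hnon w2 ?_ hw2x
        simp [Walk.support_cons]
      exact ⟨w1, w2, hw1, hw2, h₁, h₂⟩

theorem stmt_13 {V : Type*} (G : SimpleGraph V) (h2vc : TwoVertexConnected G)
    (L : List (Ear G))
    (hcyc : ∃ h0 : 0 < L.length, IsCycleEar (L.get ⟨0, h0⟩))
    (hdisj : ∀ i j (hi : i < L.length) (hj : j < L.length), i ≠ j →
      Disjoint (earEdges (L.get ⟨i, hi⟩)) (earEdges (L.get ⟨j, hj⟩)))
    (hattach : ∀ i (hi : i < L.length), 0 < i → IsEarOver (prevVerts L i) (L.get ⟨i, hi⟩))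
    (hsize : ∀ i (hi : i < L.length), 0 < i → 3 ≤ earSize (L.get ⟨i, hi⟩))
    (X : Set V) (hX : X = {x | ∃ i, ∃ hi : i < L.length, x ∈ earVerts (L.get ⟨i, hi⟩)})
    (hmax : ¬ ∃ e : Ear G, IsEarOver X e ∧ 3 ≤ earSize e) :
    ∀ a ∈ Xᶜ, ∀ b ∈ Xᶜ, ¬ G.Adj a b := by
  classical
  intro a ha b hb hadj
  rw [Set.mem_compl_iff] at ha hb
  obtain ⟨h0, -⟩ := hcyc
  have hx0 : (L.get ⟨0, h0⟩).1 ∈ X := by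
    rw [hX]; exact ⟨0, h0, Walk.start_mem_support _⟩
  obtain ⟨w⟩ := h2vc.2.1.preconnected a (L.get ⟨0, h0⟩).1
  obtain ⟨x, hxX, p, hp, -, hpnon⟩ := trim_walk w ha hx0
  obtain ⟨c1, c2, hc1, hc2, hxc1, hc1c2⟩ :=
    extract_two p.reverse hp.reverse
      (by intro y hy hne
          rw [Walk.support_reverse, List.mem_reverse] at hy
          exact hpnon y hy hne) ha hb hadj
  have hc2ne : c2 ≠ c1 := hc1c2.ne'
  have hxne : x ≠ c1 := fun h => hc1 (h ▸ hxX)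
  obtain ⟨w2⟩ := (h2vc.2.2 c1).preconnected ⟨c2, hc2ne⟩ ⟨x, hxne⟩
  obtain ⟨z, hzX, q, hq, hqsub, hqnon⟩ :=
    trim_walk (u := c2) (v := x) (w2.map (SimpleGraph.Embedding.induce {u : V | u ≠ c1}).toHom : G.Walk c2 x)
      hc2 hxX
  have hqc1 : c1 ∉ q.support := by
    intro h
    have hmem := hqsub c1 h
    erw [Walk.support_map] at hmem
    obtain ⟨⟨u, hu⟩, -, huu⟩ := List.mem_map.mp hmem
    exact hu huu
  have hc2z : c2 ≠ z := fun h => hc2 (h ▸ hzX)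
  have hql : 1 ≤ q.length := by
    cases q with
    | nil => exact absurd rfl hc2z
    | cons h q' => simp [Walk.length_cons]
  have hxq : x ∈ q.support → x = z := by
    intro h
    by_contra hne
    exact hqnon x h hne hxX
  have hc1X : c1 ∉ X := hc1
  by_cases hzx : z = x
  · subst hzx
    refine hmax ⟨⟨z, z, Walk.cons hxc1 (Walk.cons hc1c2 q)⟩, Or.inl ⟨⟨rfl, ?_⟩, ?_⟩, ?_⟩
    · rw [Walk.copy_rfl_rfl, Walk.isCycle_def]
      refine ⟨⟨?_⟩, by simp, ?_⟩
      · simp only [Walk.edges_cons, List.nodup_cons]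
        refine ⟨?_, ?_, hq.isTrail.edges_nodup⟩
        · simp only [List.mem_cons]
          push_neg
          constructor
          · intro h
            rw [Sym2.eq_iff] at h
            rcases h with ⟨h1, -⟩ | ⟨h1, -⟩
            · exact hxne h1
            · exact hc2 (h1 ▸ hzX)
          · intro h
            exact hqc1 (Walk.snd_mem_support_of_mem_edges q h)
        · intro h
          exact hqc1 (Walk.fst_mem_support_of_mem_edges q h)
      · simp only [Walk.support_cons, List.tail_cons, List.nodup_cons]
        exact ⟨hqc1, hq.support_nodup⟩
    · ext y
      simp only [earVerts, Set.mem_inter_iff, Set.mem_setOf_eq, Walk.support_cons,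
        List.mem_cons, Set.mem_singleton_iff]
      constructor
      · rintro ⟨hy1 | hy1 | hy1, hy2⟩
        · exact hy1
        · exact absurd hy2 (hy1 ▸ hc1X)
        · by_contra hne
          exact hqnon y hy1 (fun h => hne (h ▸ rfl)) hy2
      · rintro rfl
        exact ⟨Or.inl rfl, hzX⟩
    · simp only [earSize, Walk.length_cons]
      omega
  · refine hmax ⟨⟨x, z, Walk.cons hxc1 (Walk.cons hc1c2 q)⟩, Or.inr ⟨fun h => hzx h.symm, ?_, ?_⟩, ?_⟩
    · rw [Walk.isPath_def]
      simp only [Walk.support_cons, List.nodup_cons, List.mem_cons]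
      push_neg
      refine ⟨⟨hxne, fun h => hzx (hxq h).symm⟩, hqc1, hq.support_nodup⟩
    · ext y
      simp only [earVerts, Set.mem_inter_iff, Set.mem_setOf_eq, Walk.support_cons,
        List.mem_cons, Set.mem_insert_iff, Set.mem_singleton_iff]
      constructor
      · rintro ⟨hy1 | hy1 | hy1, hy2⟩
        · exact Or.inl hy1
        · exact absurd hy2 (hy1 ▸ hc1X)
        · right
          by_contra hne
          exact hqnon y hy1 hne hy2
      · rintro (rfl | rfl)
        · exact ⟨Or.inl rfl, hxX⟩
        · exact ⟨Or.inr (Or.inr (Walk.end_mem_support q)), hzX⟩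
    · simp only [earSize, Walk.length_cons]
      omega
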